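/- Let $p > 1$, $m \in \mathbb{R}$, $\alpha_2 < 2$, with $\frac{m+1}{p} < 2 - \alpha_2$. Let $u \in W^{2,p}_{loc}((0,\infty))$ with $y^{\alpha_2}(u'' + u'/y) \in L^p((0,\infty); y^m dy)$. Then $\lim_{y \to 0^+} u(y)$ exists in $\mathbb{R}$ if and only if $\lim_{y \to 0^+} y\, u'(y) = 0$. -/

import Mathlib

open MeasureTheory Filter
open scoped ENNReal Topology

/-- The weighted measure `y^m dy` on `(0,∞)`. -/
noncomputable def wm (m : ℝ) : Measure ℝ :=
  (volume.restrict (Set.Ioi 0)).withDensity fun y => ENNReal.ofReal (y ^ m)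

open Set

/-- FTC + limit at 0⁺ for a function with integrable derivative near 0. -/
lemma ftc_limit (g g' : ℝ → ℝ)
    (hg : ∀ y, 0 < y → HasDerivAt g (g' y) y)
    (hint : IntegrableOn g' (Ioc 0 1)) :
    (∀ y ∈ Ioc (0:ℝ) 1, g y = g 1 - ∫ t in Ioc y 1, g' t) ∧
      Tendsto g (𝓝[>] 0) (𝓝 (g 1 - ∫ t in Ioc 0 1, g' t)) := by
  have key : ∀ y ∈ Ioc (0:ℝ) 1, g y = g 1 - ∫ t in Ioc y 1, g' t := by
    intro y hy
    have hle : y ≤ 1 := hy.2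
    have hii : IntervalIntegrable g' volume y 1 := by
      rw [intervalIntegrable_iff_integrableOn_Ioc_of_le hle]
      exact hint.mono_set (Ioc_subset_Ioc_left hy.1.le)
    have hftc : ∫ t in y..1, g' t = g 1 - g y := by
      apply intervalIntegral.integral_eq_sub_of_hasDerivAt _ hii
      intro t ht
      rw [uIcc_of_le hle] at ht
      exact hg t (lt_of_lt_of_le hy.1 ht.1)
    rw [intervalIntegral.integral_of_le hle] at hftc
    linarith
  refine ⟨key, ?_⟩
  have habs : Tendsto (fun y => ∫ t in Ioc 0 y, |g' t|) (𝓝[>] 0) (𝓝 0) := by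
    have hd := MeasureTheory.tendsto_integral_filter_of_dominated_convergence
      (μ := volume.restrict (Ioc (0:ℝ) 1)) (l := 𝓝[>] (0:ℝ))
      (F := fun y t => (Ioc (0:ℝ) y).indicator (fun t => |g' t|) t)
      (f := fun _ => (0:ℝ)) (bound := fun t => |g' t|)
      (Eventually.of_forall fun y =>
        (hint.abs.aestronglyMeasurable).indicator measurableSet_Ioc)
      (Eventually.of_forall fun y => Eventually.of_forall fun t => by
        simpa [Real.norm_eq_abs, abs_abs] using
          norm_indicator_le_norm_self (f := fun t => |g' t|) (s := Ioc (0:ℝ) y) (a := t))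
      hint.abs
      ?_
    · simp only [integral_zero] at hd
      apply hd.congr'
      filter_upwards [Ioo_mem_nhdsGT_of_mem (by norm_num : (0:ℝ) ∈ Ico (0:ℝ) 1)] with y hy
      rw [integral_indicator measurableSet_Ioc, Measure.restrict_restrict measurableSet_Ioc,
        Ioc_inter_Ioc]
      simp [max_self, min_eq_left hy.2.le]
    · filter_upwards [ae_restrict_mem measurableSet_Ioc] with t ht
      have : ∀ᶠ y in 𝓝[>] (0:ℝ), (Ioc (0:ℝ) y).indicator (fun t => |g' t|) t = 0 := by
        filter_upwards [Ioo_mem_nhdsGT_of_mem (by exact ⟨le_refl _, ht.1⟩ : (0:ℝ) ∈ Ico 0 t)]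
          with y hy
        apply indicator_of_notMem
        exact fun hmem => absurd hmem.2 (not_le.2 hy.2)
      exact Tendsto.congr' (this.mono fun y hy => hy.symm) tendsto_const_nhds
  have hI : Tendsto (fun y => ∫ t in Ioc 0 y, g' t) (𝓝[>] 0) (𝓝 0) := by
    apply squeeze_zero_norm' _ habs
    filter_upwards [Ioo_mem_nhdsGT_of_mem (by norm_num : (0:ℝ) ∈ Ico (0:ℝ) 1)] with y hy
    calc ‖∫ t in Ioc 0 y, g' t‖ ≤ ∫ t in Ioc 0 y, ‖g' t‖ := norm_integral_le_integral_norm _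
      _ = ∫ t in Ioc 0 y, |g' t| := by simp [Real.norm_eq_abs]
  have hsplit : ∀ᶠ y in 𝓝[>] (0:ℝ),
      g y = g 1 - (∫ t in Ioc 0 1, g' t) + ∫ t in Ioc 0 y, g' t := by
    filter_upwards [Ioo_mem_nhdsGT_of_mem (by norm_num : (0:ℝ) ∈ Ico (0:ℝ) 1)] with y hy
    have hy' : y ∈ Ioc (0:ℝ) 1 := ⟨hy.1, hy.2.le⟩
    have hunion : ∫ t in Ioc 0 1, g' t = (∫ t in Ioc 0 y, g' t) + ∫ t in Ioc y 1, g' t := by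
      rw [← Ioc_union_Ioc_eq_Ioc hy.1.le hy.2.le]
      exact setIntegral_union (Ioc_disjoint_Ioc_of_le le_rfl) measurableSet_Ioc
        (hint.mono_set (Ioc_subset_Ioc_right hy.2.le))
        (hint.mono_set (Ioc_subset_Ioc_left hy.1.le))
    rw [key y hy']
    rw [hunion]
    ring
  rw [show g 1 - (∫ t in Ioc 0 1, g' t) =
      g 1 - (∫ t in Ioc 0 1, g' t) + 0 by ring]
  exact Tendsto.congr' (hsplit.mono fun y hy => hy.symm) (tendsto_const_nhds.add hI)

lemma lintegral_rpow_Ioc {e s : ℝ} (he : -1 < e) (hs : 0 < s) :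
    ∫⁻ t in Set.Ioc 0 s, ENNReal.ofReal (t ^ e) = ENNReal.ofReal (s ^ (e+1) / (e+1)) := by
  have hi : IntegrableOn (fun t : ℝ => t ^ e) (Set.Ioc 0 s) := by
    have := intervalIntegral.intervalIntegrable_rpow' (a := 0) (b := s) he
    rwa [intervalIntegrable_iff_integrableOn_Ioc_of_le hs.le] at this
  rw [← ofReal_integral_eq_lintegral_ofReal hi ?_]
  · congr 1
    rw [← intervalIntegral.integral_of_le hs.le, integral_rpow (Or.inl he),
      Real.zero_rpow (by linarith : e + 1 ≠ 0)]
    ring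
  · filter_upwards [ae_restrict_mem measurableSet_Ioc] with t ht
    exact Real.rpow_nonneg ht.1.le _

lemma wm_restrict (m s : ℝ) :
    (wm m).restrict (Set.Ioc 0 s)
      = (volume.restrict (Set.Ioc 0 s)).withDensity (fun t => ENNReal.ofReal (t ^ m)) := by
  rw [wm, restrict_withDensity measurableSet_Ioc, Measure.restrict_restrict measurableSet_Ioc,
    Set.inter_eq_left.2 Set.Ioc_subset_Ioi_self]

lemma holder_bound {p q m β : ℝ} (hpq : p.HolderConjugate q) {F : ℝ → ℝ}
    (hF : AEStronglyMeasurable F (wm m)) (he : -1 < (β - m) * q + m)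
    {s : ℝ} (hs : 0 < s) :
    ∫⁻ t in Set.Ioc 0 s, ENNReal.ofReal (t ^ β * |F t|) ∂volume ≤
      ENNReal.ofReal ((s ^ ((β-m)*q + m + 1) / ((β-m)*q + m + 1)) ^ (1/q)) *
        (∫⁻ t, (‖F t‖₊ : ℝ≥0∞) ^ p ∂(wm m)) ^ (1/p) := by
  set e := (β - m) * q + m with hedef
  have hdmeas : Measurable fun t : ℝ => ENNReal.ofReal (t ^ m) := by fun_prop
  have hAmeas : Measurable fun t : ℝ => ENNReal.ofReal (t ^ (β - m)) := by fun_prop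
  have hBmeas : AEMeasurable (fun t : ℝ => (‖F t‖₊ : ℝ≥0∞)) ((wm m).restrict (Set.Ioc 0 s)) :=
    (hF.restrict).enorm
  set ν := (wm m).restrict (Set.Ioc 0 s) with hν
  -- rewrite LHS as an integral against ν
  have step1 : ∫⁻ t in Set.Ioc 0 s, ENNReal.ofReal (t ^ β * |F t|) ∂volume
      = ∫⁻ t, ((fun t => ENNReal.ofReal (t ^ (β - m))) * fun t => (‖F t‖₊ : ℝ≥0∞)) t ∂ν := by
    rw [hν, wm_restrict,
      lintegral_withDensity_eq_lintegral_mul₀' hdmeas.aemeasurable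
        (by rw [← wm_restrict]; exact (hAmeas.aemeasurable.mul hBmeas))]
    refine setLIntegral_congr_fun measurableSet_Ioc (fun t ht => ?_)
    have ht0 : (0:ℝ) < t := ht.1
    simp only [Pi.mul_apply]
    rw [← enorm_eq_nnnorm, Real.enorm_eq_ofReal_abs, ← ENNReal.ofReal_mul (Real.rpow_nonneg ht0.le _),
      ← ENNReal.ofReal_mul (by positivity)]
    congr 1
    rw [← mul_assoc, ← Real.rpow_add ht0, add_sub_cancel]
  rw [step1]
  calc ∫⁻ t, ((fun t => ENNReal.ofReal (t ^ (β - m))) * fun t => (‖F t‖₊ : ℝ≥0∞)) t ∂ν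
      ≤ (∫⁻ t, (ENNReal.ofReal (t ^ (β - m))) ^ q ∂ν) ^ (1/q) *
        (∫⁻ t, ((‖F t‖₊ : ℝ≥0∞)) ^ p ∂ν) ^ (1/p) :=
        ENNReal.lintegral_mul_le_Lp_mul_Lq ν hpq.symm hAmeas.aemeasurable hBmeas
    _ ≤ ENNReal.ofReal ((s ^ (e + 1) / (e + 1)) ^ (1/q)) *
        (∫⁻ t, (‖F t‖₊ : ℝ≥0∞) ^ p ∂(wm m)) ^ (1/p) := by
        refine mul_le_mul' (le_of_eq ?_)
          (ENNReal.rpow_le_rpow (lintegral_mono' Measure.restrict_le_self le_rfl)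
            (one_div_nonneg.2 hpq.nonneg))
        · -- first factor: compute exactly
          have hqcalc : ∫⁻ t, (ENNReal.ofReal (t ^ (β - m))) ^ q ∂ν
              = ENNReal.ofReal (s ^ (e + 1) / (e + 1)) := by
            rw [hν, wm_restrict,
              lintegral_withDensity_eq_lintegral_mul₀' hdmeas.aemeasurable
                (by fun_prop)]
            rw [show ∫⁻ t in Set.Ioc 0 s, ((fun t => ENNReal.ofReal (t ^ m)) *
                fun t => (ENNReal.ofReal (t ^ (β - m))) ^ q) t ∂volume
                = ∫⁻ t in Set.Ioc 0 s, ENNReal.ofReal (t ^ e) ∂volume from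
              setLIntegral_congr_fun measurableSet_Ioc (fun t ht => ?_)]
            · exact lintegral_rpow_Ioc he hs
            · have ht0 : (0:ℝ) < t := ht.1
              simp only [Pi.mul_apply]
              rw [ENNReal.ofReal_rpow_of_nonneg (Real.rpow_nonneg ht0.le _) hpq.symm.nonneg,
                ← Real.rpow_mul ht0.le, ← ENNReal.ofReal_mul (Real.rpow_nonneg ht0.le _),
                ← Real.rpow_add ht0, show m + (β - m) * q = e by rw [hedef]; ring]
          rw [hqcalc, ENNReal.ofReal_rpow_of_nonneg
            (div_nonneg (by positivity) (by linarith)) (one_div_nonneg.2 hpq.symm.nonneg)]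

/-- Case `c = 1`: if `(m+1)/p < 2-α₂` and `y^{α₂}(u'' + u'/y) ∈ L^p_m`, then
`lim_{y→0⁺} u(y)` exists in `ℝ` iff `lim_{y→0⁺} y u'(y) = 0`. -/
theorem stmt17 (p m α₂ : ℝ) (hp : 1 < p) (hα : α₂ < 2)
    (h : (m + 1) / p < 2 - α₂)
    (u u' u'' : ℝ → ℝ)
    (h1 : ∀ y, 0 < y → HasDerivAt u (u' y) y)
    (h2 : ∀ y, 0 < y → HasDerivAt u' (u'' y) y)
    (hf : MemLp (fun y => y ^ α₂ * (u'' y + u' y / y)) (ENNReal.ofReal p) (wm m)) :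
    (∃ L : ℝ, Tendsto u (𝓝[>] 0) (𝓝 L)) ↔
      Tendsto (fun y => y * u' y) (𝓝[>] 0) (𝓝 0) := by
  have hp0 : (0:ℝ) < p := by linarith
  set q : ℝ := p / (p - 1) with hqdef
  have hpq : p.HolderConjugate q := Real.HolderConjugate.conjExponent hp
  have hq0 : 0 < q := hpq.symm.pos
  set γ : ℝ := 2 - α₂ - (m + 1) / p with hγdef
  have hγ : 0 < γ := by rw [hγdef]; linarith
  set e : ℝ := (1 - α₂ - m) * q + m with hedef
  have hErel : e + 1 = γ * q := by
    rw [hedef, hγdef, hqdef]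
    have hne : p - 1 ≠ 0 := sub_ne_zero.2 hp.ne'
    field_simp
    ring
  have he : -1 < e := by nlinarith [mul_pos hγ hq0]
  set F : ℝ → ℝ := fun y => y ^ α₂ * (u'' y + u' y / y) with hFdef
  have hFm : AEStronglyMeasurable F (wm m) := hf.1
  set K : ℝ≥0∞ := ∫⁻ t, (‖F t‖₊ : ℝ≥0∞) ^ p ∂(wm m) with hKdef
  have hKfin : K ≠ ⊤ := by
    intro hcon
    have h2' := hf.2
    rw [eLpNorm_eq_lintegral_rpow_enorm_toReal (ENNReal.ofReal_pos.2 hp0).ne' ENNReal.ofReal_ne_top,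
      ENNReal.toReal_ofReal hp0.le] at h2'
    rw [hKdef] at hcon
    simp only [enorm_eq_nnnorm, hcon] at h2'
    rw [ENNReal.top_rpow_of_pos (by positivity : (0:ℝ) < 1 / p)] at h2'
    exact lt_irrefl _ h2'
  have hbound : ∀ s : ℝ, 0 < s →
      ∫⁻ t in Set.Ioc 0 s, ENNReal.ofReal (t ^ (1 - α₂) * |F t|) ∂volume ≤
        ENNReal.ofReal ((s ^ (e + 1) / (e + 1)) ^ (1/q)) * K ^ (1/p) := by
    intro s hs
    rw [hKdef, hedef]
    exact holder_bound hpq hFm (by rw [hedef] at he; exact he) hs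
  have hRfin : ∀ s : ℝ, ENNReal.ofReal ((s ^ (e+1) / (e+1)) ^ (1/q)) * K ^ (1/p) ≠ ⊤ :=
    fun s => ENNReal.mul_ne_top ENNReal.ofReal_ne_top
      (ENNReal.rpow_ne_top_of_nonneg (by positivity) hKfin)
  -- v = y u'
  set v : ℝ → ℝ := fun y => y * u' y with hvdef
  set v' : ℝ → ℝ := fun y => y * u'' y + u' y with hv'def
  have hvd : ∀ y, 0 < y → HasDerivAt v (v' y) y := by
    intro y hy
    have hd := (hasDerivAt_id y).mul (h2 y hy)
    have hval : (1:ℝ) * u' y + id y * u'' y = v' y := by simp only [hv'def, id]; ring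
    rw [← hval]
    exact hd
  have hrel : ∀ t : ℝ, 0 < t → v' t = t ^ (1 - α₂) * F t := by
    intro t ht
    have h1t : t ^ (1 - α₂) * t ^ α₂ = t := by
      rw [← Real.rpow_add ht, sub_add_cancel, Real.rpow_one]
    simp only [hv'def, hFdef]
    rw [← mul_assoc, h1t, mul_add, mul_comm t (u' t / t), div_mul_cancel₀ _ ht.ne']
  have hmes : AEStronglyMeasurable v' (volume.restrict (Set.Ioc 0 1)) := by
    have heq : ∀ t ∈ Set.Ioc (0:ℝ) 1, (fun t => t * deriv u' t + deriv u t) t = v' t := by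
      intro t ht
      simp only [hv'def, (h2 t ht.1).deriv, (h1 t ht.1).deriv]
    refine AEStronglyMeasurable.congr ?_ ((ae_restrict_iff' measurableSet_Ioc).2 (ae_of_all _ heq))
    exact ((measurable_id.mul (measurable_deriv u')).add (measurable_deriv u)).aestronglyMeasurable
  have hvint : IntegrableOn v' (Set.Ioc 0 1) := by
    refine ⟨hmes, ?_⟩
    rw [hasFiniteIntegral_iff_norm]
    have heq : ∫⁻ t in Set.Ioc 0 1, ENNReal.ofReal ‖v' t‖ ∂volume
        = ∫⁻ t in Set.Ioc 0 1, ENNReal.ofReal (t ^ (1 - α₂) * |F t|) ∂volume := by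
      refine setLIntegral_congr_fun measurableSet_Ioc (fun t ht => ?_)
      rw [Real.norm_eq_abs, hrel t ht.1, abs_mul,
        abs_of_nonneg (Real.rpow_nonneg ht.1.le _)]
    rw [heq]
    exact lt_of_le_of_lt (hbound 1 one_pos) (lt_top_iff_ne_top.2 (hRfin 1))
  obtain ⟨hvkey, hvlim⟩ := ftc_limit v v' hvd hvint
  set v₀ : ℝ := v 1 - (∫ t in Set.Ioc 0 1, v' t) with hv₀def
  -- the constant
  set c₁ : ℝ := (1 / (e + 1)) ^ (1/q) with hc₁def
  have hc₁nn : 0 ≤ c₁ := Real.rpow_nonneg (le_of_lt (one_div_pos.2 (by linarith))) _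
  set C : ℝ := c₁ * (K ^ (1/p)).toReal with hCdef
  have hC0 : 0 ≤ C := mul_nonneg hc₁nn ENNReal.toReal_nonneg
  have hHs : ∀ s : ℝ, 0 < s → s ≤ 1 → (∫ t in Set.Ioc 0 s, |v' t|) ≤ C * s ^ γ := by
    intro s hs hs1
    have hIint : IntegrableOn (fun t => |v' t|) (Set.Ioc 0 s) :=
      (hvint.mono_set (Set.Ioc_subset_Ioc_right hs1)).abs
    have hofreal : ENNReal.ofReal (∫ t in Set.Ioc 0 s, |v' t|)
        = ∫⁻ t in Set.Ioc 0 s, ENNReal.ofReal (t ^ (1 - α₂) * |F t|) ∂volume := by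
      rw [ofReal_integral_eq_lintegral_ofReal hIint (ae_of_all _ fun t => abs_nonneg _)]
      refine setLIntegral_congr_fun measurableSet_Ioc (fun t ht => ?_)
      rw [hrel t ht.1, abs_mul, abs_of_nonneg (Real.rpow_nonneg ht.1.le _)]
    have hb := hbound s hs
    rw [← hofreal] at hb
    have hx : ((s ^ (e + 1) / (e + 1)) ^ (1/q)) = s ^ γ * c₁ := by
      rw [div_eq_mul_one_div,
        Real.mul_rpow (by positivity) (le_of_lt (one_div_pos.2 (by linarith))),
        ← Real.rpow_mul hs.le,
        show (e + 1) * (1/q) = γ by rw [hErel]; field_simp, ← hc₁def]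
    have htr : (∫ t in Set.Ioc 0 s, |v' t|)
        ≤ (ENNReal.ofReal ((s ^ (e+1) / (e+1)) ^ (1/q)) * K ^ (1/p)).toReal := by
      have hnn : (0:ℝ) ≤ ∫ t in Set.Ioc 0 s, |v' t| :=
        setIntegral_nonneg measurableSet_Ioc fun t _ => abs_nonneg _
      calc (∫ t in Set.Ioc 0 s, |v' t|) = (ENNReal.ofReal (∫ t in Set.Ioc 0 s, |v' t|)).toReal :=
            (ENNReal.toReal_ofReal hnn).symm
        _ ≤ _ := ENNReal.toReal_mono (hRfin s) hb
    refine htr.trans (le_of_eq ?_)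
    rw [hx, ENNReal.toReal_mul,
      ENNReal.toReal_ofReal (mul_nonneg (Real.rpow_nonneg hs.le _) hc₁nn), hCdef]
    ring
  have hdiff : ∀ s ∈ Set.Ioc (0:ℝ) 1, |v s - v₀| ≤ C * s ^ γ := by
    intro s hs
    have hs1 := hvkey s hs
    have hunion : (∫ t in Set.Ioc 0 1, v' t)
        = (∫ t in Set.Ioc 0 s, v' t) + ∫ t in Set.Ioc s 1, v' t := by
      rw [← Set.Ioc_union_Ioc_eq_Ioc hs.1.le hs.2]
      exact setIntegral_union (Set.Ioc_disjoint_Ioc_of_le le_rfl) measurableSet_Ioc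
        (hvint.mono_set (Set.Ioc_subset_Ioc_right hs.2))
        (hvint.mono_set (Set.Ioc_subset_Ioc_left hs.1.le))
    have hval : v s - v₀ = ∫ t in Set.Ioc 0 s, v' t := by
      rw [hs1, hv₀def, hunion]; ring
    rw [hval]
    calc |∫ t in Set.Ioc 0 s, v' t| ≤ ∫ t in Set.Ioc 0 s, |v' t| := by
          simpa [Real.norm_eq_abs] using
            norm_integral_le_integral_norm (μ := volume.restrict (Set.Ioc 0 s)) v'
      _ ≤ C * s ^ γ := hHs s hs.1 hs.2
  -- w = u - v₀ log
  set w : ℝ → ℝ := fun y => u y - v₀ * Real.log y with hwdef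
  set w' : ℝ → ℝ := fun y => (v y - v₀) / y with hw'def
  have hwd : ∀ y, 0 < y → HasDerivAt w (w' y) y := by
    intro y hy
    have hder : HasDerivAt w (u' y - v₀ * y⁻¹) y :=
      (h1 y hy).sub ((Real.hasDerivAt_log hy.ne').const_mul v₀)
    have hval : w' y = u' y - v₀ * y⁻¹ := by
      simp only [hw'def, hvdef]
      field_simp
    rw [hval]
    exact hder
  have hvc : ContinuousOn v (Set.Ioi 0) := by
    have hu'c : ContinuousOn u' (Set.Ioi 0) :=
      fun y hy => (h2 y hy).continuousAt.continuousWithinAt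
    exact continuousOn_id.mul hu'c
  have hwint : IntegrableOn w' (Set.Ioc 0 1) := by
    have hcw : ContinuousOn w' (Set.Ioc 0 1) := by
      refine ContinuousOn.div ?_ continuousOn_id fun t ht => ht.1.ne'
      exact ((hvc.mono fun t ht => ht.1).sub continuousOn_const)
    have hgint : IntegrableOn (fun s : ℝ => C * s ^ (γ - 1)) (Set.Ioc 0 1) := by
      have hii := intervalIntegral.intervalIntegrable_rpow'
        (a := 0) (b := 1) (by linarith : (-1:ℝ) < γ - 1)
      rw [intervalIntegrable_iff_integrableOn_Ioc_of_le zero_le_one] at hii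
      exact hii.const_mul C
    refine Integrable.mono' hgint (hcw.aestronglyMeasurable measurableSet_Ioc) ?_
    filter_upwards [ae_restrict_mem measurableSet_Ioc] with t ht
    have hb := hdiff t ht
    calc ‖w' t‖ = |v t - v₀| / t := by
          rw [Real.norm_eq_abs, hw'def]
          rw [abs_div, abs_of_pos ht.1]
      _ ≤ (C * t ^ γ) / t := by
          gcongr
          exact ht.1.le
      _ = C * t ^ (γ - 1) := by
          rw [mul_div_assoc, ← Real.rpow_sub_one ht.1.ne']
  obtain ⟨-, hwlim⟩ := ftc_limit w w' hwd hwint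
  set W : ℝ := w 1 - (∫ t in Set.Ioc 0 1, w' t) with hWdef
  constructor
  · rintro ⟨L, hL⟩
    by_cases hv0 : v₀ = 0
    · exact hv0 ▸ hvlim
    · exfalso
      have hlog : Tendsto (fun y => v₀ * Real.log y) (𝓝[>] 0) (𝓝 (L - W)) := by
        have heq : (fun y : ℝ => u y - w y) =ᶠ[𝓝[>] 0] fun y => v₀ * Real.log y := by
          filter_upwards with y
          simp only [hwdef]
          ring
        exact Tendsto.congr' heq (hL.sub hwlim)
      rcases lt_or_gt_of_ne hv0 with hneg | hpos
      · exact not_tendsto_nhds_of_tendsto_atTop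
          ((tendsto_const_mul_atTop_of_neg hneg).2 Real.tendsto_log_nhdsGT_zero)
          _ hlog
      · exact not_tendsto_nhds_of_tendsto_atBot
          ((tendsto_const_mul_atBot_of_pos hpos).2 Real.tendsto_log_nhdsGT_zero)
          _ hlog
  · intro hv
    have hv0 : v₀ = 0 := tendsto_nhds_unique hvlim hv
    refine ⟨W, ?_⟩
    have heq : w =ᶠ[𝓝[>] 0] u := by
      filter_upwards with y
      simp [hwdef, hv0]
    exact Tendsto.congr' heq hwlim
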